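/- For every finite simple connected graph G and every field F, the well-covered dimension of G over F is at least the simplicial clique number: wcdim(G, F) ≥ sc(G). -/

import Mathlib

open Finset

open scoped Classical

/-- The closed neighborhood `N[v]` of a vertex `v`: `v` together with its neighbors. -/
noncomputable def clNbhd {V : Type*} [Fintype V] (G : SimpleGraph V) (v : V) : Finset V :=
  univ.filter (fun u => u = v ∨ G.Adj v u)

/-- The closed neighborhood `N[s]` of a finite set `s` of vertices. -/
noncomputable def clNbhdSet {V : Type*} [Fintype V] (G : SimpleGraph V) (s : Finset V) : Finset V :=
  s.biUnion (clNbhd G)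

/-- A maximal clique of a graph: a clique not properly contained in any other clique. -/
def IsMaxClique {V : Type*} (G : SimpleGraph V) (C : Finset V) : Prop :=
  G.IsClique (C : Set V) ∧ ∀ D : Finset V, G.IsClique (D : Set V) → C ⊆ D → D = C

/-- A vertex is simplicial if its closed neighborhood is a maximal clique. -/
def IsSimplicialVertex {V : Type*} [Fintype V] (G : SimpleGraph V) (v : V) : Prop :=
  IsMaxClique G (clNbhd G v)

/-- A simplicial clique: a maximal clique containing at least one simplicial vertex. -/
def IsSimplicialClique {V : Type*} [Fintype V] (G : SimpleGraph V) (C : Finset V) : Prop :=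
  IsMaxClique G C ∧ ∃ v ∈ C, IsSimplicialVertex G v

/-- The set `C(G)` of simplicial cliques of `G`. -/
noncomputable def simpCliques {V : Type*} [Fintype V] (G : SimpleGraph V) : Finset (Finset V) :=
  univ.filter (fun C => IsSimplicialClique G C)

/-- The simplicial clique number `sc(G) = |C(G)|`. -/
noncomputable def scNum {V : Type*} [Fintype V] (G : SimpleGraph V) : ℕ :=
  (simpCliques G).card

/-- A simplicial clique covered graph (SCCG): `C(G)` is nonempty and the union of the
simplicial cliques is the whole vertex set. -/
def IsSCCG {V : Type*} [Fintype V] (G : SimpleGraph V) : Prop :=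
  (simpCliques G).Nonempty ∧ ∀ v : V, ∃ C ∈ simpCliques G, v ∈ C

/-- The connection set `W` of `G`: vertices belonging to at least two simplicial cliques. -/
noncomputable def connSet {V : Type*} [Fintype V] (G : SimpleGraph V) : Finset V :=
  univ.filter (fun v => 1 < ((simpCliques G).filter (fun C => v ∈ C)).card)

/-- `S(I)`: the set of simplicial cliques not contained in the closed neighborhood `N[I]`. -/
noncomputable def sFam {V : Type*} [Fintype V] (G : SimpleGraph V) (I : Finset V) :
    Finset (Finset V) :=
  (simpCliques G).filter (fun C => ¬ C ⊆ clNbhdSet G I)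

/-- An independent set of vertices: no two of its vertices are adjacent. -/
def IsIndep {V : Type*} (G : SimpleGraph V) (s : Finset V) : Prop :=
  ∀ u ∈ s, ∀ w ∈ s, ¬ G.Adj u w

/-- A maximal independent set: an independent set not properly contained in any
other independent set. -/
def IsMaxIndep {V : Type*} (G : SimpleGraph V) (s : Finset V) : Prop :=
  IsIndep G s ∧ ∀ t : Finset V, IsIndep G t → s ⊆ t → t = s

/-- A well-covered weighting: a weighting whose sum over every maximal independent set
is the same. -/
def IsWCW {V : Type*} (G : SimpleGraph V) {F : Type*} [Field F] (f : V → F) : Prop :=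
  ∀ s t : Finset V, IsMaxIndep G s → IsMaxIndep G t →
    ∑ v ∈ s, f v = ∑ v ∈ t, f v

/-- The well-covered space of `G` over `F`: the `F`-vector space of well-covered
weightings of `G`. -/
noncomputable def wcSpace {V : Type*} (G : SimpleGraph V) (F : Type*) [Field F] :
    Submodule F (V → F) where
  carrier := {f | IsWCW G f}
  zero_mem' := by
    intro s t _ _
    simp
  add_mem' := by
    intro f g hf hg
    simp only [Set.mem_setOf_eq] at hf hg ⊢
    intro s t hs ht
    simp only [Pi.add_apply, Finset.sum_add_distrib]
    rw [hf s t hs ht, hg s t hs ht]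
  smul_mem' := by
    intro c f hf
    simp only [Set.mem_setOf_eq] at hf ⊢
    intro s t hs ht
    simp only [Pi.smul_apply, smul_eq_mul, ← Finset.mul_sum]
    rw [hf s t hs ht]

/-- The well-covered dimension `wcdim(G, F)`. -/
noncomputable def wcdim {V : Type*} (G : SimpleGraph V) (F : Type*) [Field F] : ℕ :=
  Module.finrank F (wcSpace G F)


section Aux

variable {V : Type*} [Fintype V] {G : SimpleGraph V}

lemma mem_clNbhd_self (v : V) : v ∈ clNbhd G v := by simp [clNbhd]

lemma maxclique_eq_clNbhd {C : Finset V} {v : V} (hv : IsSimplicialVertex G v)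
    (hC : IsMaxClique G C) (hvC : v ∈ C) : C = clNbhd G v := by
  have hsub : C ⊆ clNbhd G v := by
    intro u hu
    simp only [clNbhd, mem_filter, mem_univ, true_and]
    rcases eq_or_ne u v with h | h
    · exact Or.inl h
    · exact Or.inr (hC.1 hvC hu (Ne.symm h))
  exact (hC.2 (clNbhd G v) hv.1 hsub).symm

lemma mis_sum_indicator {F : Type*} [Field F] {s C : Finset V}
    (hs : IsMaxIndep G s) (hC : IsSimplicialClique G C) :
    ∑ v ∈ s, (if v ∈ C then (1 : F) else 0) = 1 := by
  obtain ⟨hCmax, v, hvC, hv⟩ := hC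
  have hCN : C = clNbhd G v := maxclique_eq_clNbhd hv hCmax hvC
  have hex : ∃ a ∈ s, a ∈ C := by
    by_contra h
    push_neg at h
    have hvs : v ∉ s := fun hvs => h v hvs hvC
    have hind : IsIndep G (insert v s) := by
      intro u hu w hw
      rcases Finset.mem_insert.mp hu with hu | hu <;>
        rcases Finset.mem_insert.mp hw with hw | hw
      · subst hu; subst hw; exact G.irrefl
      · intro hadj
        rw [hu] at hadj
        exact h w hw (by rw [hCN]; simp [clNbhd, hadj])
      · intro hadj
        rw [hw] at hadj
        exact h u hu (by rw [hCN]; simp [clNbhd, hadj.symm])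
      · exact hs.1 u hu w hw
    have := hs.2 (insert v s) hind (Finset.subset_insert _ _)
    exact hvs (this ▸ Finset.mem_insert_self v s)
  obtain ⟨a, has, haC⟩ := hex
  rw [Finset.sum_eq_single_of_mem a has]
  · simp [haC]
  · intro b hb hba
    have : b ∉ C := by
      intro hbC
      exact hs.1 b hb a has (hCmax.1 hbC haC hba)
    simp [this]

lemma indicator_wcw {F : Type*} [Field F] {C : Finset V} (hC : IsSimplicialClique G C) :
    IsWCW G (fun v => if v ∈ C then (1 : F) else 0) := by
  intro s t hs ht
  rw [mis_sum_indicator hs hC, mis_sum_indicator ht hC]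

lemma mem_simpCliques_iff {C : Finset V} :
    C ∈ simpCliques G ↔ IsSimplicialClique G C := by
  simp [simpCliques]

end Aux

/-- For every finite simple connected graph `G` and every field `F`,
`wcdim(G, F) ≥ sc(G)`. -/
theorem wcdim_ge_sc {V : Type*} [Fintype V] (G : SimpleGraph V) (hconn : G.Connected)
    (F : Type*) [Field F] :
    scNum G ≤ wcdim G F := by
  classical
  set e : {C // C ∈ simpCliques G} → wcSpace G F :=
    fun C => ⟨fun v => if v ∈ C.1 then (1 : F) else 0,
      indicator_wcw (mem_simpCliques_iff.mp C.2)⟩ with he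
  have hli : LinearIndependent F e := by
    apply LinearIndependent.of_comp (wcSpace G F).subtype
    rw [Fintype.linearIndependent_iff]
    intro g hg C
    obtain ⟨hCmax, v, hvC, hv⟩ := mem_simpCliques_iff.mp C.2
    have hval := congrFun hg v
    simp only [Function.comp, he, Submodule.coe_subtype, Finset.sum_apply, Pi.smul_apply,
      smul_eq_mul, Pi.zero_apply, mul_ite, mul_one, mul_zero] at hval
    rw [Finset.sum_eq_single C] at hval
    · simpa [hvC] using hval
    · intro D _ hDC
      have : v ∉ D.1 := by
        intro hvD
        obtain ⟨hDmax, _⟩ := mem_simpCliques_iff.mp D.2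
        have h1 : D.1 = clNbhd G v := maxclique_eq_clNbhd hv hDmax hvD
        have h2 : C.1 = clNbhd G v := maxclique_eq_clNbhd hv hCmax hvC
        exact hDC (Subtype.ext (h1.trans h2.symm))
      simp [this]
    · simp
  have hcard := hli.fintype_card_le_finrank
  rwa [Fintype.card_coe] at hcard
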